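/- Let a : ℝ → M_+(n,m) be a smooth curve of full-rank n×m matrices satisfying the geodesic equation a'' = a'(a^Ta)^{-1}(a')^T a + a'(a^Ta)^{-1}a^T a' − a(a^Ta)^{-1}(a')^T a' + (1/2) tr(a'(a^Ta)^{-1}(a')^T) a − tr(a'(a^Ta)^{-1}a^T) a'. Then L := a' a^+ (with a^+ = (a^Ta)^{-1}a^T) satisfies L' + tr(L) L + (L^T L − L L^T) − (1/2) tr(L^T L) a a^+ = 0. -/

import Mathlib

open Matrix

attribute [local instance] Matrix.frobeniusNormedAddCommGroup Matrix.frobeniusNormedSpace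

noncomputable section

/-- Moore-Penrose pseudoinverse of a full-rank `n × m` matrix. -/
def aplus {n m : ℕ} (a : Matrix (Fin n) (Fin m) ℝ) : Matrix (Fin m) (Fin n) ℝ :=
  (aᵀ * a)⁻¹ * aᵀ

/-- Right-hand side of the geodesic equation `a_tt = geoRHS (a, a_t)` of the
metric `⟨u,v⟩_a = tr(u (aᵀa)⁻¹ vᵀ)√det(aᵀa)` on full-rank `n × m` matrices. -/
def geoRHS {n m : ℕ} (x v : Matrix (Fin n) (Fin m) ℝ) : Matrix (Fin n) (Fin m) ℝ :=
  v * (xᵀ * x)⁻¹ * vᵀ * x + v * (xᵀ * x)⁻¹ * xᵀ * v - x * (xᵀ * x)⁻¹ * vᵀ * v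
    + ((1 / 2) * Matrix.trace (v * (xᵀ * x)⁻¹ * vᵀ)) • x
    - (Matrix.trace (v * (xᵀ * x)⁻¹ * xᵀ)) • v

section helpers

variable {N M K : ℕ} {t : ℝ}

/-- The entry map as a continuous linear map. -/
private def entryCLM (N M : ℕ) (i : Fin N) (j : Fin M) :
    Matrix (Fin N) (Fin M) ℝ →L[ℝ] ℝ :=
  LinearMap.toContinuousLinearMap
    { toFun := fun A => A i j
      map_add' := fun _ _ => rfl
      map_smul' := fun _ _ => rfl }

private lemma entry_hasDerivAt {f : ℝ → Matrix (Fin N) (Fin M) ℝ}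
    {f' : Matrix (Fin N) (Fin M) ℝ} (h : HasDerivAt f f' t) (i : Fin N) (j : Fin M) :
    HasDerivAt (fun s => f s i j) (f' i j) t :=
  (entryCLM N M i j).hasFDerivAt.comp_hasDerivAt t h

private lemma hasDerivAt_of_entries {f : ℝ → Matrix (Fin N) (Fin M) ℝ}
    {f' : Matrix (Fin N) (Fin M) ℝ}
    (h : ∀ i j, HasDerivAt (fun s => f s i j) (f' i j) t) :
    HasDerivAt f f' t := by
  have key : HasDerivAt
      (fun s => ∑ i : Fin N, ∑ j : Fin M, f s i j • Matrix.single i j (1 : ℝ))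
      (∑ i : Fin N, ∑ j : Fin M, f' i j • Matrix.single i j (1 : ℝ)) t :=
    HasDerivAt.fun_sum fun i _ => HasDerivAt.fun_sum fun j _ => (h i j).smul_const _
  have e1 : ∀ (g : Matrix (Fin N) (Fin M) ℝ),
      (∑ i : Fin N, ∑ j : Fin M, g i j • Matrix.single i j (1 : ℝ)) = g := by
    intro g
    ext i j
    simp [Matrix.sum_apply, Matrix.smul_apply, Matrix.single, Matrix.of_apply,
      ite_and, Finset.sum_ite_eq, Finset.sum_ite_eq']
  have e2 : (fun s => ∑ i : Fin N, ∑ j : Fin M, f s i j • Matrix.single i j (1 : ℝ)) = f := by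
    funext s; exact e1 (f s)
  rw [e2, e1 f'] at key
  exact key

private lemma hasDerivAt_matMul {A : ℝ → Matrix (Fin N) (Fin M) ℝ}
    {B : ℝ → Matrix (Fin M) (Fin K) ℝ} {A' : Matrix (Fin N) (Fin M) ℝ}
    {B' : Matrix (Fin M) (Fin K) ℝ}
    (hA : HasDerivAt A A' t) (hB : HasDerivAt B B' t) :
    HasDerivAt (fun s => A s * B s) (A' * B t + A t * B') t := by
  apply hasDerivAt_of_entries
  intro i j
  simp only [Matrix.mul_apply, Matrix.add_apply]
  rw [← Finset.sum_add_distrib]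
  exact HasDerivAt.fun_sum fun k _ =>
    (entry_hasDerivAt hA i k).mul (entry_hasDerivAt hB k j)

private lemma hasDerivAt_matTranspose {f : ℝ → Matrix (Fin N) (Fin M) ℝ}
    {f' : Matrix (Fin N) (Fin M) ℝ} (h : HasDerivAt f f' t) :
    HasDerivAt (fun s => (f s)ᵀ) f'ᵀ t := by
  apply hasDerivAt_of_entries
  intro i j
  simpa using entry_hasDerivAt h j i

private lemma differentiableAt_det {G : ℝ → Matrix (Fin K) (Fin K) ℝ}
    (h : ∀ i j, DifferentiableAt ℝ (fun s => G s i j) t) :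
    DifferentiableAt ℝ (fun s => (G s).det) t := by
  simp only [Matrix.det_apply']
  exact DifferentiableAt.fun_sum fun σ _ =>
    (differentiableAt_const _).mul
      (DifferentiableAt.fun_finsetProd fun i _ => h (σ i) i)

private lemma hasDerivAt_matInv {G : ℝ → Matrix (Fin K) (Fin K) ℝ}
    {G' : Matrix (Fin K) (Fin K) ℝ}
    (hG : HasDerivAt G G' t) (hunit : ∀ s, IsUnit (G s).det) :
    HasDerivAt (fun s => (G s)⁻¹) (-((G t)⁻¹ * G' * (G t)⁻¹)) t := by
  have hent : ∀ (s : ℝ) i j, DifferentiableAt ℝ (fun u => G u i j) s → True := fun _ _ _ _ => trivial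
  -- entry differentiability of G at t
  have hGent : ∀ i j, DifferentiableAt ℝ (fun s => G s i j) t := fun i j =>
    (entry_hasDerivAt hG i j).differentiableAt
  -- differentiability of the inverse at t
  have hdet : DifferentiableAt ℝ (fun s => (G s).det) t := differentiableAt_det hGent
  have hdiff : DifferentiableAt ℝ (fun s => (G s)⁻¹) t := by
    have hinv : ∀ s, (G s)⁻¹ = ((G s).det)⁻¹ • adjugate (G s) := by
      intro s
      rw [Matrix.inv_def, Ring.inverse_eq_inv]
    have : DifferentiableAt ℝ (fun s => ((G s).det)⁻¹ • adjugate (G s)) t := by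
      apply DifferentiableAt.smul (c := fun s => ((G s).det)⁻¹) (f := fun s => adjugate (G s))
      · exact hdet.inv ((hunit t).ne_zero)
      · -- adjugate entries differentiable
        have : ∀ i j, DifferentiableAt ℝ (fun s => adjugate (G s) i j) t := by
          intro i j
          simp only [Matrix.adjugate_apply]
          apply differentiableAt_det
          intro i' j'
          by_cases hij : i' = j
          · simp only [Matrix.updateRow_apply, hij, if_true]
            exact differentiableAt_const _
          · simp only [Matrix.updateRow_apply, hij, if_false]
            exact hGent i' j'
        -- assemble entrywise differentiability into matrix differentiability
        have h2 : HasDerivAt (fun s => adjugate (G s))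
            (Matrix.of fun i j => deriv (fun s => adjugate (G s) i j) t) t := by
          apply hasDerivAt_of_entries
          intro i j
          exact (this i j).hasDerivAt
        exact h2.differentiableAt
    exact this.congr_of_eventuallyEq (Filter.Eventually.of_forall fun s => hinv s)
  -- identify the derivative
  obtain D := deriv (fun s => (G s)⁻¹) t
  have hD : HasDerivAt (fun s => (G s)⁻¹) (deriv (fun s => (G s)⁻¹) t) t := hdiff.hasDerivAt
  set D := deriv (fun s => (G s)⁻¹) t with hDdef
  have hprod : HasDerivAt (fun s => (G s)⁻¹ * G s) (D * G t + (G t)⁻¹ * G') t :=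
    hasDerivAt_matMul hD hG
  have hone : (fun s => (G s)⁻¹ * G s) = fun _ => (1 : Matrix (Fin K) (Fin K) ℝ) := by
    funext s; exact Matrix.nonsing_inv_mul _ (hunit s)
  rw [hone] at hprod
  have hzero : D * G t + (G t)⁻¹ * G' = 0 :=
    hprod.unique (hasDerivAt_const t _)
  have hDeq : D = -((G t)⁻¹ * G' * (G t)⁻¹) := by
    have h1 : D * G t = -((G t)⁻¹ * G') := by
      have := hzero
      rw [add_eq_zero_iff_eq_neg] at this
      exact this
    calc D = D * (G t * (G t)⁻¹) := by rw [Matrix.mul_nonsing_inv _ (hunit t), Matrix.mul_one]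
    _ = (D * G t) * (G t)⁻¹ := by rw [Matrix.mul_assoc]
    _ = -((G t)⁻¹ * G') * (G t)⁻¹ := by rw [h1]
    _ = -((G t)⁻¹ * G' * (G t)⁻¹) := by rw [Matrix.neg_mul]
  rw [← hDeq]
  exact hD

end helpers

/-- if `a` solves the geodesic equation, then `L = a' a⁺`
solves `L' + tr(L) L + (Lᵀ L - L Lᵀ) - (1/2) tr(Lᵀ L) a a⁺ = 0`. -/
theorem stmt_8 {n m : ℕ} (hmn : m ≤ n) (a a' : ℝ → Matrix (Fin n) (Fin m) ℝ)
    (hrank : ∀ t, (a t).rank = m)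
    (hda : ∀ t, HasDerivAt a (a' t) t)
    (hgeo : ∀ t, HasDerivAt a' (geoRHS (a t) (a' t)) t)
    (L : ℝ → Matrix (Fin n) (Fin n) ℝ)
    (hL : ∀ t, L t = a' t * aplus (a t)) :
    ∀ t, HasDerivAt L
      (-((Matrix.trace (L t)) • L t + ((L t)ᵀ * L t - L t * (L t)ᵀ)
          - ((1 / 2) * Matrix.trace ((L t)ᵀ * L t)) • (a t * aplus (a t)))) t := by
  intro t
  -- invertibility of aᵀa
  have hunit : ∀ s, IsUnit ((a s)ᵀ * a s).det := by
    intro s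
    have hr : ((a s)ᵀ * a s).rank = m := by
      rw [Matrix.rank_transpose_mul_self]; exact hrank s
    have hsurj : Function.Surjective ((a s)ᵀ * a s).mulVecLin := by
      rw [← LinearMap.range_eq_top]
      apply Submodule.eq_top_of_finrank_eq
      rw [← Matrix.rank, hr]
      simp [Module.finrank_fintype_fun_eq_card]
    have : IsUnit ((a s)ᵀ * a s) := Matrix.mulVec_surjective_iff_isUnit.mp hsurj
    exact (Matrix.isUnit_iff_isUnit_det _).mp this
  set A := a t with hA
  set V := a' t with hV
  set B : Matrix (Fin m) (Fin m) ℝ := ((a t)ᵀ * a t)⁻¹ with hB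
  -- basic algebraic facts
  have hB1 : (Aᵀ * A) * B = 1 := Matrix.mul_nonsing_inv _ (hunit t)
  have hB2 : B * (Aᵀ * A) = 1 := Matrix.nonsing_inv_mul _ (hunit t)
  have hBt : Bᵀ = B := by
    rw [hB, Matrix.transpose_nonsing_inv]
    congr 1
    rw [Matrix.transpose_mul, Matrix.transpose_transpose]
  -- derivative computation
  have hGd : HasDerivAt (fun s => (a s)ᵀ * a s) (Vᵀ * A + Aᵀ * V) t :=
    hasDerivAt_matMul (hasDerivAt_matTranspose (hda t)) (hda t)
  have hBd : HasDerivAt (fun s => ((a s)ᵀ * a s)⁻¹) (-(B * (Vᵀ * A + Aᵀ * V) * B)) t :=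
    hasDerivAt_matInv hGd hunit
  have hInner : HasDerivAt (fun s => ((a s)ᵀ * a s)⁻¹ * (a s)ᵀ)
      ((-(B * (Vᵀ * A + Aᵀ * V) * B)) * Aᵀ + B * Vᵀ) t :=
    hasDerivAt_matMul hBd (hasDerivAt_matTranspose (hda t))
  have hLd : HasDerivAt (fun s => a' s * (((a s)ᵀ * a s)⁻¹ * (a s)ᵀ))
      (geoRHS A V * (B * Aᵀ) + V * ((-(B * (Vᵀ * A + Aᵀ * V) * B)) * Aᵀ + B * Vᵀ)) t :=
    hasDerivAt_matMul (hgeo t) hInner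
  have hLfun : L = fun s => a' s * (((a s)ᵀ * a s)⁻¹ * (a s)ᵀ) := by
    funext s
    rw [hL s, aplus]
  -- now identify the derivative value
  have hLt : a' t * aplus (a t) = V * (B * Aᵀ) := by
    rw [aplus]
  have key : -((Matrix.trace (L t)) • L t + ((L t)ᵀ * L t - L t * (L t)ᵀ)
        - ((1 / 2) * Matrix.trace ((L t)ᵀ * L t)) • (a t * aplus (a t)))
      = geoRHS A V * (B * Aᵀ) + V * ((-(B * (Vᵀ * A + Aᵀ * V) * B)) * Aᵀ + B * Vᵀ) := by
    have hLtval : L t = V * (B * Aᵀ) := by rw [hL t, hLt]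
    have haplus : a t * aplus (a t) = A * (B * Aᵀ) := by rw [aplus]
    have hLtrans : (V * (B * Aᵀ))ᵀ = A * (B * Vᵀ) := by
      rw [Matrix.transpose_mul, Matrix.transpose_mul, Matrix.transpose_transpose, hBt,
        Matrix.mul_assoc]
    have hcan1 : Aᵀ * (A * (B * Vᵀ)) = Vᵀ := by
      rw [← Matrix.mul_assoc, ← Matrix.mul_assoc, hB1, Matrix.one_mul]
    have hcan2 : Aᵀ * (A * (B * Aᵀ)) = Aᵀ := by
      rw [← Matrix.mul_assoc, ← Matrix.mul_assoc, hB1, Matrix.one_mul]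
    have htr1 : Matrix.trace (V * (B * Aᵀ)) = Matrix.trace (V * B * Aᵀ) := by
      rw [Matrix.mul_assoc]
    have htr2 : Matrix.trace ((V * (B * Aᵀ))ᵀ * (V * (B * Aᵀ))) = Matrix.trace (V * B * Vᵀ) := by
      rw [hLtrans, Matrix.trace_mul_comm, Matrix.mul_assoc, Matrix.mul_assoc, hcan1,
        ← Matrix.mul_assoc]
    rw [hLtval, haplus, htr1, htr2, hLtrans]
    have hBA : (Aᵀ * A)⁻¹ = B := by rw [hA, ← hB]
    simp only [geoRHS, hBA]
    simp only [Matrix.add_mul, Matrix.sub_mul, Matrix.mul_add, Matrix.mul_sub,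
      Matrix.neg_mul, Matrix.mul_neg, smul_mul_assoc, Matrix.mul_assoc]
    rw [hcan1]
    simp only [Matrix.smul_mul, Matrix.mul_assoc]
    module
  rw [key, hLfun]
  exact hLd

end
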